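/- Let K ≥ 1 be an integer, and let t_1, …, t_K be positive reals with t_1 ≥ α₁ t_2 and t_j ≥ t_{j+1} for 2 ≤ j ≤ K-1, for some α₁ ≥ 1. Then (Σ_{j=1}^{K} t_j)²/(Σ_{j=1}^{K} t_j²) ≤ (α₁ + (K-1))²/(α₁² + (K-1)). -/

import Mathlib

theorem partial_ratio_bound (K : ℕ) (hK : 1 ≤ K) (α₁ : ℝ) (hα : 1 ≤ α₁) (t : ℕ → ℝ)
    (hpos : ∀ j, 1 ≤ j → j ≤ K → 0 < t j)
    (h12 : 2 ≤ K → α₁ * t 2 ≤ t 1)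
    (hmono : ∀ j, 2 ≤ j → j < K → t (j + 1) ≤ t j) :
    (∑ j ∈ Finset.Icc 1 K, t j) ^ 2 / (∑ j ∈ Finset.Icc 1 K, (t j) ^ 2) ≤
      (α₁ + ((K : ℝ) - 1)) ^ 2 / (α₁ ^ 2 + ((K : ℝ) - 1)) := by
  have hα0 : (0:ℝ) < α₁ := lt_of_lt_of_le one_pos hα
  rcases eq_or_lt_of_le hK with h1 | hK2
  · -- K = 1
    subst h1
    have ht1 : 0 < t 1 := hpos 1 le_rfl le_rfl
    simp only [Finset.Icc_self, Finset.sum_singleton, Nat.cast_one, sub_self, add_zero]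
    rw [div_self (by positivity), div_self (by positivity)]
  · -- K ≥ 2
    have hK2' : 2 ≤ K := hK2
    have hKR : (2:ℝ) ≤ K := by exact_mod_cast hK2'
    have ht1 : 0 < t 1 := hpos 1 le_rfl (by omega)
    have ht2 : 0 < t 2 := hpos 2 (by omega) hK2'
    have hat : α₁ * t 2 ≤ t 1 := h12 hK2'
    -- monotonicity: t j ≤ t 2 for 2 ≤ j ≤ K
    have hle : ∀ j, 2 ≤ j → j ≤ K → t j ≤ t 2 := by
      intro j
      induction j with
      | zero => intro h; omega
      | succ n ih =>
        intro h2 hK'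
        rcases Nat.lt_or_ge n 2 with hn | hn
        · have : n + 1 = 2 := by omega
          rw [this]
        · have hnK : n < K := by omega
          exact le_trans (hmono n hn hnK) (ih hn (by omega))
    have hsplit : Finset.Icc 1 K = insert 1 (Finset.Icc 2 K) := by
      ext x
      simp only [Finset.mem_Icc, Finset.mem_insert]
      omega
    have hnotmem : (1:ℕ) ∉ Finset.Icc 2 K := by simp
    set T := ∑ j ∈ Finset.Icc 2 K, t j with hT
    set R := ∑ j ∈ Finset.Icc 2 K, (t j) ^ 2 with hR
    have hScard : (Finset.Icc 2 K).card = K - 1 := by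
      rw [Nat.card_Icc]; omega
    have hcardR : ((Finset.Icc 2 K).card : ℝ) = (K:ℝ) - 1 := by
      rw [hScard]; push_cast [Nat.cast_sub (by omega : 1 ≤ K)]; ring
    -- Cauchy–Schwarz: T^2 ≤ (K-1) R
    have hCS : T ^ 2 ≤ ((K:ℝ) - 1) * R := by
      have := sq_sum_le_card_mul_sum_sq (s := Finset.Icc 2 K) (f := t)
      rwa [hcardR] at this
    -- R ≤ (K-1) * t 2 ^ 2
    have hRb : R ≤ ((K:ℝ) - 1) * (t 2) ^ 2 := by
      rw [hR]
      calc ∑ j ∈ Finset.Icc 2 K, (t j) ^ 2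
          ≤ ∑ j ∈ Finset.Icc 2 K, (t 2) ^ 2 := by
            apply Finset.sum_le_sum
            intro j hj
            rw [Finset.mem_Icc] at hj
            have hjp := hpos j (by omega) hj.2
            have := hle j hj.1 hj.2
            nlinarith
        _ = ((K:ℝ) - 1) * (t 2) ^ 2 := by
            rw [Finset.sum_const, nsmul_eq_mul, hcardR]
    have hT0 : 0 ≤ T := Finset.sum_nonneg fun j hj => by
      rw [Finset.mem_Icc] at hj
      exact (hpos j (by omega) hj.2).le
    have hR0 : 0 ≤ R := Finset.sum_nonneg fun j hj => sq_nonneg _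
    have hRt1 : α₁ ^ 2 * R ≤ ((K:ℝ) - 1) * (t 1) ^ 2 := by
      have h1 : α₁ ^ 2 * R ≤ α₁ ^ 2 * (((K:ℝ) - 1) * (t 2) ^ 2) := by
        apply mul_le_mul_of_nonneg_left hRb (by positivity)
      have h2 : (α₁ * t 2) ^ 2 ≤ (t 1) ^ 2 := by
        have h0 : 0 ≤ α₁ * t 2 := by positivity
        nlinarith
      nlinarith [hKR]
    -- Step A: α₁ * (t 1 + T)^2 ≤ (α₁ + (K-1)) * (t 1 ^ 2 + α₁ * R)
    have hA : α₁ * (t 1 + T) ^ 2 ≤ (α₁ + ((K:ℝ) - 1)) * ((t 1) ^ 2 + α₁ * R) := by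
      have hKm1 : (0:ℝ) < (K:ℝ) - 1 := by linarith
      nlinarith [sq_nonneg (((K:ℝ) - 1) * t 1 - α₁ * T),
        mul_nonneg (mul_nonneg hα0.le (by linarith : (0:ℝ) ≤ α₁ + ((K:ℝ)-1)))
          (by linarith : (0:ℝ) ≤ ((K:ℝ) - 1) * R - T ^ 2)]
    -- Step B
    have hB : ((t 1) ^ 2 + α₁ * R) * (α₁ ^ 2 + ((K:ℝ) - 1)) ≤
        α₁ * (α₁ + ((K:ℝ) - 1)) * ((t 1) ^ 2 + R) := by
      nlinarith [mul_nonneg (by linarith : (0:ℝ) ≤ α₁ - 1)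
        (by linarith : (0:ℝ) ≤ ((K:ℝ) - 1) * (t 1) ^ 2 - α₁ ^ 2 * R)]
    have hden : (0:ℝ) < α₁ ^ 2 + ((K:ℝ) - 1) := by nlinarith
    have hQ : (0:ℝ) < (t 1) ^ 2 + R := by positivity
    rw [hsplit, Finset.sum_insert hnotmem, Finset.sum_insert hnotmem, ← hT, ← hR]
    rw [div_le_div_iff₀ hQ hden]
    -- chain
    have hαK : (0:ℝ) ≤ α₁ + ((K:ℝ) - 1) := by linarith
    have hmain : α₁ * ((t 1 + T) ^ 2 * (α₁ ^ 2 + ((K:ℝ) - 1))) ≤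
        α₁ * ((α₁ + ((K:ℝ) - 1)) ^ 2 * ((t 1) ^ 2 + R)) := by
      calc α₁ * ((t 1 + T) ^ 2 * (α₁ ^ 2 + ((K:ℝ) - 1)))
          = α₁ * (t 1 + T) ^ 2 * (α₁ ^ 2 + ((K:ℝ) - 1)) := by ring
        _ ≤ (α₁ + ((K:ℝ) - 1)) * ((t 1) ^ 2 + α₁ * R) * (α₁ ^ 2 + ((K:ℝ) - 1)) :=
            mul_le_mul_of_nonneg_right hA hden.le
        _ = (α₁ + ((K:ℝ) - 1)) * (((t 1) ^ 2 + α₁ * R) * (α₁ ^ 2 + ((K:ℝ) - 1))) := by ring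
        _ ≤ (α₁ + ((K:ℝ) - 1)) * (α₁ * (α₁ + ((K:ℝ) - 1)) * ((t 1) ^ 2 + R)) :=
            mul_le_mul_of_nonneg_left hB hαK
        _ = α₁ * ((α₁ + ((K:ℝ) - 1)) ^ 2 * ((t 1) ^ 2 + R)) := by ring
    exact le_of_mul_le_mul_left hmain hα0
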